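/- Assume Ann_A(M) = 0. Every K-derivation d of the Lie algebra L = E_∞ can be written as d = ad(z) + d_{S,T} for some z ∈ L, S ∈ S_E, and T ∈ T_E. -/

import Mathlib

set_option linter.unusedSectionVars false
set_option linter.unusedVariables false
set_option maxHeartbeats 1000000


/- Purely even case of the paper's super setting: K a commutative unital ring
containing 1/2, A a commutative unital associative K-algebra, M an A-module
(hence also a K-module), q : M × M → A a symmetric A-bilinear form. -/

variable {K A M : Type*} [CommRing K] [Invertible (2 : K)] [CommRing A] [Algebra K A]
  [AddCommGroup M] [Module A M] [Module K M] [IsScalarTower K A M]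
  [SMulCommClass A K M] [SMulCommClass K A M]

variable (K) in
/-- `a·id_M`, viewed as a `K`-linear endomorphism of `M`. -/
def aId (a : A) : Module.End K M := a • (1 : Module.End K M)

variable (K) in
/-- `E_{m,n}(p) = q(n,p)·m − q(m,p)·n`, viewed as a `K`-linear endomorphism of `M`. -/
noncomputable def EmapK (q : M →ₗ[A] M →ₗ[A] A) (m n : M) : Module.End K M :=
  ((q n).restrictScalars K).smulRight m - ((q m).restrictScalars K).smulRight n

variable (K) in
/-- `osp(q)`, realized inside `End_K(M)`: the set of `A`-linear endomorphisms `x`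
of `M` with `q(x(m),n) + q(x(n),m) = 0` for all `m, n`. -/
def ospK (q : M →ₗ[A] M →ₗ[A] A) : Set (Module.End K M) :=
  {x | (∀ (a : A) (p : M), x (a • p) = a • x p) ∧
       ∀ m n : M, q (x m) n + q (x n) m = 0}

variable (K) in
/-- `eosp(q)`: the additive subgroup generated by the `E_{m,n}`. -/
noncomputable def eospK (q : M →ₗ[A] M →ₗ[A] A) : AddSubgroup (Module.End K M) :=
  AddSubgroup.closure {f | ∃ m n : M, f = EmapK K q m n}

variable (K) in
/-- The bracket on `E_∞ = A × M × M × E`, where `E` is a Lie subalgebra of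
`osp(q)` containing `eosp(q)` (given as a `K`-submodule of `End_K(M)` closed
under commutators and containing all `E_{m,n}`):
`[(a,m,n,x),(a',m',n',x')] = (q(m,n') − q(n,m'),
  a·m' + x(m') − a'·m − x'(m), −a·n' + x(n') + a'·n − x'(n),
  E_{m,n'} + E_{n,m'} + [x,x'])`. -/
noncomputable def brEinf (q : M →ₗ[A] M →ₗ[A] A) (E : Submodule K (Module.End K M))
    (hEe : ∀ m n : M, EmapK K q m n ∈ E)
    (hbr : ∀ x ∈ E, ∀ y ∈ E, x * y - y * x ∈ E)
    (u v : A × M × M × E) : A × M × M × E :=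
  (q u.2.1 v.2.2.1 - q u.2.2.1 v.2.1,
   u.1 • v.2.1 + (u.2.2.2 : Module.End K M) v.2.1 - v.1 • u.2.1
     - (v.2.2.2 : Module.End K M) u.2.1,
   -(u.1 • v.2.2.1) + (u.2.2.2 : Module.End K M) v.2.2.1 + v.1 • u.2.2.1
     - (v.2.2.2 : Module.End K M) u.2.2.1,
   ⟨EmapK K q u.2.1 v.2.2.1 + EmapK K q u.2.2.1 v.2.1 +
      ((u.2.2.2 : Module.End K M) * (v.2.2.2 : Module.End K M)
        - (v.2.2.2 : Module.End K M) * (u.2.2.2 : Module.End K M)),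
    add_mem (add_mem (hEe _ _) (hEe _ _)) (hbr _ u.2.2.2.2 _ v.2.2.2.2)⟩)

variable (K) in
/-- `S_E`: the set of `S ∈ End_K(M)` satisfying (S1) `[S, a·id_M] ∈ A·id_M`,
(S2) `[S, q(m,n)·id_M] = (q(S(m),n) + q(S(n),m))·id_M`, and (S3) `[S, E] ⊆ E`. -/
def SE (q : M →ₗ[A] M →ₗ[A] A) (E : Set (Module.End K M)) : Set (Module.End K M) :=
  {S | (∀ a : A, ∃ b : A, S * aId K a - aId K a * S = aId K b) ∧
       (∀ m n : M, S * aId K (q m n) - aId K (q m n) * S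
          = aId K (q (S m) n + q (S n) m)) ∧
       (∀ x ∈ E, S * x - x * S ∈ E)}

variable (K) in
/-- `T_E`: the set of `T ∈ End_K(M)` satisfying (T1) `[T, a·id_M] ∈ E`,
(T2) `[T, q(m,n)·id_M] = E_{T(m),n} + E_{T(n),m}`, and (T3) `[T, E] ⊆ A·id_M`. -/
def TE (q : M →ₗ[A] M →ₗ[A] A) (E : Set (Module.End K M)) : Set (Module.End K M) :=
  {T | (∀ a : A, T * aId K a - aId K a * T ∈ E) ∧
       (∀ m n : M, T * aId K (q m n) - aId K (q m n) * T
          = EmapK K q (T m) n + EmapK K q (T n) m) ∧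
       (∀ x ∈ E, ∃ b : A, T * x - x * T = aId K b)}

variable (K) in
/-- `d = d_{S,T}`: the map `d` on `E_∞ = A × M × M × E` is given by
`d(a, m, n, x) = (σ_S(a) + τ_T(x), (S+T)(m), (S−T)(n), [T, a·id_M] + [S, x])`,
where `σ_S(a)·id_M = [S, a·id_M]` and `τ_T(x)·id_M = [T, x]`. -/
def isDST (q : M →ₗ[A] M →ₗ[A] A) (E : Submodule K (Module.End K M))
    (S T : Module.End K M) (d : (A × M × M × E) → (A × M × M × E)) : Prop :=
  ∀ (a : A) (m n : M) (x : Module.End K M) (hx : x ∈ E) (sa ta : A),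
    S * aId K a - aId K a * S = aId K sa →
    T * x - x * T = aId K ta →
    (d (a, m, n, ⟨x, hx⟩)).1 = sa + ta ∧
    (d (a, m, n, ⟨x, hx⟩)).2.1 = S m + T m ∧
    (d (a, m, n, ⟨x, hx⟩)).2.2.1 = S n - T n ∧
    ((d (a, m, n, ⟨x, hx⟩)).2.2.2 : Module.End K M)
      = (T * aId K a - aId K a * T) + (S * x - x * S)


section aux

variable (q : M →ₗ[A] M →ₗ[A] A)

lemma aId_apply (a : A) (p : M) : (aId K a : Module.End K M) p = a • p := rfl

lemma EmapK_apply (m n p : M) : EmapK K q m n p = q n p • m - q m p • n := rfl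

lemma EmapK_zero_left (n : M) : EmapK K q 0 n = 0 := by
  ext p; simp [EmapK_apply]

lemma EmapK_zero_right (m : M) : EmapK K q m 0 = 0 := by
  ext p; simp [EmapK_apply]

lemma EmapK_swap (m n : M) : EmapK K q n m = - EmapK K q m n := by
  ext p; simp [EmapK_apply]

lemma EmapK_neg_left (m n : M) : EmapK K q (-m) n = - EmapK K q m n := by
  ext p; simp [EmapK_apply]; abel

lemma q_smulK (k : K) (m n : M) : q (k • m) n = k • q m n := by
  rw [← algebraMap_smul A k m, map_smul, LinearMap.smul_apply, algebraMap_smul]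

lemma q_smulK_right (k : K) (m n : M) : q m (k • n) = k • q m n := by
  rw [← algebraMap_smul A k n, map_smul, algebraMap_smul]

lemma EmapK_add_left (m m' n : M) :
    EmapK K q (m + m') n = EmapK K q m n + EmapK K q m' n := by
  ext p; simp [EmapK_apply, add_smul]; abel

lemma EmapK_sub_left (m m' n : M) :
    EmapK K q (m - m') n = EmapK K q m n - EmapK K q m' n := by
  ext p; simp [EmapK_apply, sub_smul, smul_sub]; abel

lemma EmapK_smul_left (k : K) (m n : M) :
    EmapK K q (k • m) n = k • EmapK K q m n := by
  ext p
  simp only [LinearMap.smul_apply, EmapK_apply, q_smulK, smul_sub, smul_assoc]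
  rw [smul_comm ((q n) p) k m]

lemma half_cancel {N : Type*} [AddCommGroup N] [Module K N]
    {x y : N} (h : x + x = y + y) : x = y := by
  have h2 : (2:K) • x = (2:K) • y := by rw [two_smul, two_smul]; exact h
  calc x = ⅟(2:K) • ((2:K) • x) := (invOf_smul_smul _ _).symm
  _ = ⅟(2:K) • ((2:K) • y) := by rw [h2]
  _ = y := invOf_smul_smul _ _

end aux

/-- assume `Ann_A(M) = 0`. Every `K`-derivation `d` of
`L = E_∞` can be written as `d = ad(z) + d_{S,T}` for some `z ∈ L`,
`S ∈ S_E` and `T ∈ T_E`. -/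
theorem stmt16 (q : M →ₗ[A] M →ₗ[A] A) (hq : ∀ m n : M, q m n = q n m)
    (hann : ∀ a : A, (∀ p : M, a • p = 0) → a = 0)
    (E : Submodule K (Module.End K M))
    (hEe : ∀ m n : M, EmapK K q m n ∈ E)
    (hEo : (E : Set (Module.End K M)) ⊆ ospK K q)
    (hbr : ∀ x ∈ E, ∀ y ∈ E, x * y - y * x ∈ E) :
    ∀ d : (A × M × M × E) → (A × M × M × E), IsLinearMap K d →
      (∀ u v, d (brEinf K q E hEe hbr u v)
          = brEinf K q E hEe hbr (d u) v + brEinf K q E hEe hbr u (d v)) →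
      ∃ (z : A × M × M × E) (S T : Module.End K M)
        (d' : (A × M × M × E) → (A × M × M × E)),
        S ∈ SE K q (E : Set (Module.End K M)) ∧
        T ∈ TE K q (E : Set (Module.End K M)) ∧
        IsLinearMap K d' ∧ isDST K q E S T d' ∧
        ∀ u, d u = brEinf K q E hEe hbr z u + d' u := by
  intro d hlin hder
  have hdadd := hlin.map_add
  have hdsmul := hlin.map_smul
  have hdzero : d 0 = 0 := by simpa using hdsmul 0 0
  have hdneg : ∀ u, d (-u) = - d u := by
    intro u; simpa using hdsmul (-1) u
  -- bracket evaluations on simple elements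
  have L1 : ∀ m : M, brEinf K q E hEe hbr ((1:A),(0:M),(0:M),(0:E)) ((0:A),m,(0:M),(0:E))
      = ((0:A),m,(0:M),(0:E)) := by
    intro m
    simp [brEinf, Prod.ext_iff, Subtype.ext_iff, EmapK_zero_left, EmapK_zero_right]
  have L2 : ∀ n : M, brEinf K q E hEe hbr ((1:A),(0:M),(0:M),(0:E)) ((0:A),(0:M),n,(0:E))
      = ((0:A),(0:M),-n,(0:E)) := by
    intro n
    simp [brEinf, Prod.ext_iff, Subtype.ext_iff, EmapK_zero_left, EmapK_zero_right]
  have L3 : ∀ a : A, brEinf K q E hEe hbr ((1:A),(0:M),(0:M),(0:E)) (a,(0:M),(0:M),(0:E))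
      = 0 := by
    intro a
    simp [brEinf, Prod.ext_iff, Subtype.ext_iff, EmapK_zero_left, EmapK_zero_right]
  have L4 : ∀ x : E, brEinf K q E hEe hbr ((1:A),(0:M),(0:M),(0:E)) ((0:A),(0:M),(0:M),x)
      = 0 := by
    intro x
    simp [brEinf, Prod.ext_iff, Subtype.ext_iff, EmapK_zero_left, EmapK_zero_right]
  have L5 : ∀ (a : A) (m : M), brEinf K q E hEe hbr (a,(0:M),(0:M),(0:E)) ((0:A),m,(0:M),(0:E))
      = ((0:A), a • m, (0:M), (0:E)) := by
    intro a m
    simp [brEinf, Prod.ext_iff, Subtype.ext_iff, EmapK_zero_left, EmapK_zero_right]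
  have L6 : ∀ (a : A) (n : M), brEinf K q E hEe hbr (a,(0:M),(0:M),(0:E)) ((0:A),(0:M),n,(0:E))
      = ((0:A), (0:M), -(a • n), (0:E)) := by
    intro a n
    simp [brEinf, Prod.ext_iff, Subtype.ext_iff, EmapK_zero_left, EmapK_zero_right]
  have L7 : ∀ (x : E) (m : M), brEinf K q E hEe hbr ((0:A),(0:M),(0:M),x) ((0:A),m,(0:M),(0:E))
      = ((0:A), (x : Module.End K M) m, (0:M), (0:E)) := by
    intro x m
    simp [brEinf, Prod.ext_iff, Subtype.ext_iff, EmapK_zero_left, EmapK_zero_right]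
  have L8 : ∀ (x : E) (n : M), brEinf K q E hEe hbr ((0:A),(0:M),(0:M),x) ((0:A),(0:M),n,(0:E))
      = ((0:A), (0:M), (x : Module.End K M) n, (0:E)) := by
    intro x n
    simp [brEinf, Prod.ext_iff, Subtype.ext_iff, EmapK_zero_left, EmapK_zero_right]
  have L9 : ∀ (m n : M), brEinf K q E hEe hbr ((0:A),m,(0:M),(0:E)) ((0:A),(0:M),n,(0:E))
      = (q m n, (0:M), (0:M), (⟨EmapK K q m n, hEe m n⟩ : E)) := by
    intro m n
    simp [brEinf, Prod.ext_iff, Subtype.ext_iff, EmapK_zero_left, EmapK_zero_right]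
  rcases hde : d ((1:A),(0:M),(0:M),(0:E)) with ⟨a0, m0, n0, x0⟩
  have HM : ∀ m : M, d ((0:A),m,(0:M),(0:E))
      = brEinf K q E hEe hbr (a0,m0,n0,x0) ((0:A),m,(0:M),(0:E))
        + brEinf K q E hEe hbr ((1:A),(0:M),(0:M),(0:E)) (d ((0:A),m,(0:M),(0:E))) := by
    intro m
    have H := hder ((1:A),(0:M),(0:M),(0:E)) ((0:A),m,(0:M),(0:E))
    rwa [L1 m, hde] at H
  have hax : ∀ m : M, a0 • m + (x0 : Module.End K M) m = 0 := by
    intro m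
    have H := congrArg (fun u : A × M × M × E => u.2.1) (HM m)
    simp only [brEinf] at H
    simp [right_eq_add] at H
    exact H
  have hM3 : ∀ m : M, (d ((0:A),m,(0:M),(0:E))).2.2.1 = 0 := by
    intro m
    have H := congrArg (fun u : A × M × M × E => u.2.2.1) (HM m)
    simp only [brEinf] at H
    simp [eq_neg_iff_add_eq_zero] at H
    refine half_cancel (K := K) ?_
    rw [add_zero]; exact H
  have hM1 : ∀ m : M, (d ((0:A),m,(0:M),(0:E))).1 = - q n0 m := by
    intro m
    have H := congrArg (fun u : A × M × M × E => u.1) (HM m)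
    simp only [brEinf] at H
    simpa using H
  have hM4 : ∀ m : M, ((d ((0:A),m,(0:M),(0:E))).2.2.2 : Module.End K M)
      = EmapK K q n0 m := by
    intro m
    have H := congrArg (fun u : A × M × M × E => (u.2.2.2 : Module.End K M)) (HM m)
    simp only [brEinf] at H
    simpa [EmapK_zero_left, EmapK_zero_right] using H
  have HN : ∀ n : M, - d ((0:A),(0:M),n,(0:E))
      = brEinf K q E hEe hbr (a0,m0,n0,x0) ((0:A),(0:M),n,(0:E))
        + brEinf K q E hEe hbr ((1:A),(0:M),(0:M),(0:E)) (d ((0:A),(0:M),n,(0:E))) := by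
    intro n
    have H := hder ((1:A),(0:M),(0:M),(0:E)) ((0:A),(0:M),n,(0:E))
    rw [L2 n, hde] at H
    have e1 : ((0:A),(0:M),-n,(0:E)) = -((0:A),(0:M),n,(0:E)) := by
      simp [Prod.ext_iff]
    rwa [e1, hdneg] at H
  have hN2 : ∀ n : M, (d ((0:A),(0:M),n,(0:E))).2.1 = 0 := by
    intro n
    have H := congrArg (fun u : A × M × M × E => u.2.1) (HN n)
    simp only [brEinf] at H
    simp [neg_eq_iff_add_eq_zero] at H
    refine half_cancel (K := K) ?_
    rw [add_zero]; exact H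
  have hx0n : ∀ n : M, (x0 : Module.End K M) n = a0 • n := by
    intro n
    have H := congrArg (fun u : A × M × M × E => u.2.2.1) (HN n)
    simp only [brEinf] at H
    simp [neg_eq_iff_add_eq_zero] at H
    rwa [neg_add_eq_zero, eq_comm] at H
  have hN1 : ∀ n : M, (d ((0:A),(0:M),n,(0:E))).1 = - q m0 n := by
    intro n
    have H := congrArg (fun u : A × M × M × E => u.1) (HN n)
    simp only [brEinf] at H
    simp at H
    simpa using congrArg Neg.neg H
  have hN4 : ∀ n : M, ((d ((0:A),(0:M),n,(0:E))).2.2.2 : Module.End K M)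
      = - EmapK K q m0 n := by
    intro n
    have H := congrArg (fun u : A × M × M × E => (u.2.2.2 : Module.End K M)) (HN n)
    simp only [brEinf] at H
    simp [EmapK_zero_left, EmapK_zero_right] at H
    simpa using congrArg Neg.neg H
  have ha0 : a0 = 0 := by
    refine hann a0 (fun p => ?_)
    have h1 := hax p
    rw [hx0n p] at h1
    exact half_cancel (K := K) (by rw [add_zero]; exact h1)
  have hx0 : x0 = 0 := by
    refine Subtype.ext ?_
    refine LinearMap.ext fun p => ?_
    rw [hx0n p, ha0]
    simp
  have hde' : d ((1:A),(0:M),(0:M),(0:E)) = ((0:A), m0, n0, (0:E)) := by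
    rw [hde, ha0, hx0]
  clear hde HM HN hax hx0n
  have HA : ∀ a : A, (0 : A × M × M × E)
      = brEinf K q E hEe hbr ((0:A),m0,n0,(0:E)) (a,(0:M),(0:M),(0:E))
        + brEinf K q E hEe hbr ((1:A),(0:M),(0:M),(0:E)) (d (a,(0:M),(0:M),(0:E))) := by
    intro a
    have H := hder ((1:A),(0:M),(0:M),(0:E)) (a,(0:M),(0:M),(0:E))
    rwa [L3 a, hdzero, hde'] at H
  have hA2 : ∀ a : A, (d (a,(0:M),(0:M),(0:E))).2.1 = a • m0 := by
    intro a
    have H := congrArg (fun u : A × M × M × E => u.2.1) (HA a)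
    simp only [brEinf] at H
    simp at H
    exact (neg_add_eq_zero.mp H.symm).symm
  have hA3 : ∀ a : A, (d (a,(0:M),(0:M),(0:E))).2.2.1 = a • n0 := by
    intro a
    have H := congrArg (fun u : A × M × M × E => u.2.2.1) (HA a)
    simp only [brEinf] at H
    simp at H
    exact (add_neg_eq_zero.mp H.symm).symm
  have HX : ∀ x : E, (0 : A × M × M × E)
      = brEinf K q E hEe hbr ((0:A),m0,n0,(0:E)) ((0:A),(0:M),(0:M),x)
        + brEinf K q E hEe hbr ((1:A),(0:M),(0:M),(0:E)) (d ((0:A),(0:M),(0:M),x)) := by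
    intro x
    have H := hder ((1:A),(0:M),(0:M),(0:E)) ((0:A),(0:M),(0:M),x)
    rwa [L4 x, hdzero, hde'] at H
  have hX2 : ∀ x : E, (d ((0:A),(0:M),(0:M),x)).2.1 = (x : Module.End K M) m0 := by
    intro x
    have H := congrArg (fun u : A × M × M × E => u.2.1) (HX x)
    simp only [brEinf] at H
    simp at H
    exact (neg_add_eq_zero.mp H.symm).symm
  have hX3 : ∀ x : E, (d ((0:A),(0:M),(0:M),x)).2.2.1 = -((x : Module.End K M) n0) := by
    intro x
    have H := congrArg (fun u : A × M × M × E => u.2.2.1) (HX x)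
    simp only [brEinf] at H
    simp at H
    have h2 := neg_add_eq_zero.mp H.symm
    rw [h2, neg_neg]
  clear HA HX
  -- (I1)
  have I1 : ∀ (a : A) (m : M), (d ((0:A), a • m,(0:M),(0:E))).2.1
      = (d (a,(0:M),(0:M),(0:E))).1 • m
        + ((d (a,(0:M),(0:M),(0:E))).2.2.2 : Module.End K M) m
        + a • (d ((0:A),m,(0:M),(0:E))).2.1 := by
    intro a m
    have H := hder (a,(0:M),(0:M),(0:E)) ((0:A),m,(0:M),(0:E))
    rw [L5 a m] at H
    have H2 := congrArg (fun u : A × M × M × E => u.2.1) H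
    simp only [brEinf] at H2
    simp at H2
    exact H2
  -- (I2)
  have I2 : ∀ (a : A) (n : M), (d ((0:A),(0:M), a • n,(0:E))).2.2.1
      = (d (a,(0:M),(0:M),(0:E))).1 • n
        - ((d (a,(0:M),(0:M),(0:E))).2.2.2 : Module.End K M) n
        + a • (d ((0:A),(0:M),n,(0:E))).2.2.1 := by
    intro a n
    have H := hder (a,(0:M),(0:M),(0:E)) ((0:A),(0:M),n,(0:E))
    rw [L6 a n] at H
    have e1 : ((0:A),(0:M),-(a • n),(0:E)) = -((0:A),(0:M),a • n,(0:E)) := by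
      simp [Prod.ext_iff]
    rw [e1, hdneg] at H
    have H2 := congrArg (fun u : A × M × M × E => u.2.2.1) H
    simp only [brEinf] at H2
    simp at H2
    have H3 := congrArg Neg.neg H2
    simp only [neg_neg, neg_add] at H3
    rw [← sub_eq_add_neg] at H3
    exact H3
  -- (I3)
  have I3 : ∀ (x : E) (m : M), (d ((0:A), (x : Module.End K M) m,(0:M),(0:E))).2.1
      = (d ((0:A),(0:M),(0:M),x)).1 • m
        + ((d ((0:A),(0:M),(0:M),x)).2.2.2 : Module.End K M) m
        + (x : Module.End K M) ((d ((0:A),m,(0:M),(0:E))).2.1) := by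
    intro x m
    have H := hder ((0:A),(0:M),(0:M),x) ((0:A),m,(0:M),(0:E))
    rw [L7 x m] at H
    have H2 := congrArg (fun u : A × M × M × E => u.2.1) H
    simp only [brEinf] at H2
    simp at H2
    exact H2
  -- (I4)
  have I4 : ∀ (x : E) (n : M), (d ((0:A),(0:M), (x : Module.End K M) n,(0:E))).2.2.1
      = -((d ((0:A),(0:M),(0:M),x)).1 • n)
        + ((d ((0:A),(0:M),(0:M),x)).2.2.2 : Module.End K M) n
        + (x : Module.End K M) ((d ((0:A),(0:M),n,(0:E))).2.2.1) := by
    intro x n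
    have H := hder ((0:A),(0:M),(0:M),x) ((0:A),(0:M),n,(0:E))
    rw [L8 x n] at H
    have H2 := congrArg (fun u : A × M × M × E => u.2.2.1) H
    simp only [brEinf] at H2
    simp at H2
    exact H2
  -- (I5)
  have I5 : ∀ (m n : M), (d ((q m n : A),(0:M),(0:M),(0:E))).1
      + (d ((0:A),(0:M),(0:M),(⟨EmapK K q m n, hEe m n⟩ : E))).1
      = q ((d ((0:A),m,(0:M),(0:E))).2.1) n + q m ((d ((0:A),(0:M),n,(0:E))).2.2.1) := by
    intro m n
    have H := hder ((0:A),m,(0:M),(0:E)) ((0:A),(0:M),n,(0:E))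
    have hsplit : ((q m n : A), (0:M), (0:M), (⟨EmapK K q m n, hEe m n⟩ : E))
        = ((q m n : A),(0:M),(0:M),(0:E))
          + ((0:A),(0:M),(0:M),(⟨EmapK K q m n, hEe m n⟩ : E)) := by
      simp [Prod.ext_iff]
    rw [L9 m n, hsplit, hdadd] at H
    have H2 := congrArg (fun u : A × M × M × E => u.1) H
    simp only [brEinf] at H2
    simp at H2
    exact H2
  -- (I6)
  have I6 : ∀ (m n : M), ((d ((q m n : A),(0:M),(0:M),(0:E))).2.2.2 : Module.End K M)
      + ((d ((0:A),(0:M),(0:M),(⟨EmapK K q m n, hEe m n⟩ : E))).2.2.2 : Module.End K M)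
      = EmapK K q ((d ((0:A),m,(0:M),(0:E))).2.1) n
        + EmapK K q m ((d ((0:A),(0:M),n,(0:E))).2.2.1) := by
    intro m n
    have H := hder ((0:A),m,(0:M),(0:E)) ((0:A),(0:M),n,(0:E))
    have hsplit : ((q m n : A), (0:M), (0:M), (⟨EmapK K q m n, hEe m n⟩ : E))
        = ((q m n : A),(0:M),(0:M),(0:E))
          + ((0:A),(0:M),(0:M),(⟨EmapK K q m n, hEe m n⟩ : E)) := by
      simp [Prod.ext_iff]
    rw [L9 m n, hsplit, hdadd] at H
    have H2 := congrArg (fun u : A × M × M × E => (u.2.2.2 : Module.End K M)) H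
    simp only [brEinf] at H2
    simp [EmapK_zero_left, EmapK_zero_right] at H2
    exact H2
  -- linear maps B, C
  let B : Module.End K M := {
    toFun := fun m => (d ((0:A),m,(0:M),(0:E))).2.1
    map_add' := by
      intro m m'
      have e1 : ((0:A),m+m',(0:M),(0:E))
          = ((0:A),m,(0:M),(0:E)) + ((0:A),m',(0:M),(0:E)) := by
        simp [Prod.ext_iff]
      rw [e1, hdadd]; rfl
    map_smul' := by
      intro k m
      have e1 : ((0:A),k • m,(0:M),(0:E)) = k • ((0:A),m,(0:M),(0:E)) := by
        simp [Prod.ext_iff]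
      rw [e1, hdsmul]; rfl }
  let C : Module.End K M := {
    toFun := fun n => (d ((0:A),(0:M),n,(0:E))).2.2.1
    map_add' := by
      intro n n'
      have e1 : ((0:A),(0:M),n+n',(0:E))
          = ((0:A),(0:M),n,(0:E)) + ((0:A),(0:M),n',(0:E)) := by
        simp [Prod.ext_iff]
      rw [e1, hdadd]; rfl
    map_smul' := by
      intro k n
      have e1 : ((0:A),(0:M),k • n,(0:E)) = k • ((0:A),(0:M),n,(0:E)) := by
        simp [Prod.ext_iff]
      rw [e1, hdsmul]; rfl }
  let S : Module.End K M := ⅟(2:K) • (B + C)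
  let T : Module.End K M := ⅟(2:K) • (B - C)
  have hBapp : ∀ p : M, B p = (d ((0:A),p,(0:M),(0:E))).2.1 := fun p => rfl
  have hCapp : ∀ p : M, C p = (d ((0:A),(0:M),p,(0:E))).2.2.1 := fun p => rfl
  have hSapp : ∀ p : M, S p = ⅟(2:K) • (B p + C p) := fun p => rfl
  have hTapp : ∀ p : M, T p = ⅟(2:K) • (B p - C p) := fun p => rfl
  -- pointwise commutator identities
  have hSa : ∀ (a : A) (p : M),
      S (a • p) = (d (a,(0:M),(0:M),(0:E))).1 • p + a • S p := by
    intro a p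
    rw [hSapp, hSapp, hBapp, hCapp, I1 a p, I2 a p, ← hBapp p, ← hCapp p]
    generalize (d (a,(0:M),(0:M),(0:E))).1 = da
    generalize ((d (a,(0:M),(0:M),(0:E))).2.2.2 : Module.End K M) p = ea
    generalize B p = bp
    generalize C p = cp
    rw [smul_comm a (⅟(2:K)), smul_add a]
    rw [show da • p + ea + a • bp + (da • p - ea + a • cp)
        = (2:K) • (da • p) + (a • bp + a • cp) by
      rw [two_smul]; abel]
    rw [smul_add, invOf_smul_smul]
  have hTa : ∀ (a : A) (p : M),
      T (a • p) = ((d (a,(0:M),(0:M),(0:E))).2.2.2 : Module.End K M) p + a • T p := by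
    intro a p
    rw [hTapp, hTapp, hBapp, hCapp, I1 a p, I2 a p, ← hBapp p, ← hCapp p]
    generalize (d (a,(0:M),(0:M),(0:E))).1 = da
    generalize ((d (a,(0:M),(0:M),(0:E))).2.2.2 : Module.End K M) p = ea
    generalize B p = bp
    generalize C p = cp
    rw [smul_comm a (⅟(2:K)), smul_sub a]
    rw [show da • p + ea + a • bp - (da • p - ea + a • cp)
        = (2:K) • ea + (a • bp - a • cp) by
      rw [two_smul]; abel]
    rw [smul_add, invOf_smul_smul]
  have hSx : ∀ (x : E) (p : M),
      S ((x : Module.End K M) p)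
        = ((d ((0:A),(0:M),(0:M),x)).2.2.2 : Module.End K M) p
          + (x : Module.End K M) (S p) := by
    intro x p
    rw [hSapp, hSapp, hBapp, hCapp, I3 x p, I4 x p, ← hBapp p, ← hCapp p]
    rw [map_smul, map_add]
    generalize (d ((0:A),(0:M),(0:M),x)).1 = tx
    generalize ((d ((0:A),(0:M),(0:M),x)).2.2.2 : Module.End K M) p = thx
    generalize (x : Module.End K M) (B p) = xbp
    generalize (x : Module.End K M) (C p) = xcp
    rw [show tx • p + thx + xbp + (-(tx • p) + thx + xcp)
        = (2:K) • thx + (xbp + xcp) by rw [two_smul]; abel]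
    rw [smul_add, invOf_smul_smul]
  have hTx : ∀ (x : E) (p : M),
      T ((x : Module.End K M) p)
        = (d ((0:A),(0:M),(0:M),x)).1 • p
          + (x : Module.End K M) (T p) := by
    intro x p
    rw [hTapp, hTapp, hBapp, hCapp, I3 x p, I4 x p, ← hBapp p, ← hCapp p]
    rw [map_smul, map_sub]
    generalize (d ((0:A),(0:M),(0:M),x)).1 = tx
    generalize ((d ((0:A),(0:M),(0:M),x)).2.2.2 : Module.End K M) p = thx
    generalize (x : Module.End K M) (B p) = xbp
    generalize (x : Module.End K M) (C p) = xcp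
    rw [show tx • p + thx + xbp - (-(tx • p) + thx + xcp)
        = (2:K) • (tx • p) + (xbp - xcp) by rw [two_smul]; abel]
    rw [smul_add, invOf_smul_smul]
  -- negation of the generator element of E-part
  have hEneg : ∀ m n : M, ((0:A),(0:M),(0:M),(⟨EmapK K q n m, hEe n m⟩ : E))
      = -((0:A),(0:M),(0:M),(⟨EmapK K q m n, hEe m n⟩ : E)) := by
    intro m n
    have h4 : (⟨EmapK K q n m, hEe n m⟩ : E) = -(⟨EmapK K q m n, hEe m n⟩ : E) := by
      apply Subtype.ext
      rw [NegMemClass.coe_neg]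
      exact EmapK_swap q m n
    rw [h4]
    simp [Prod.ext_iff]
  -- δ(q m n) = q (S m) n + q (S n) m
  have hdelta : ∀ m n : M, (d ((q m n : A),(0:M),(0:M),(0:E))).1
      = q (S m) n + q (S n) m := by
    intro m n
    have h1 := I5 m n
    have h2 := I5 n m
    rw [← hq m n] at h2
    rw [hEneg m n, hdneg] at h2
    simp only [Prod.fst_neg] at h2
    rw [hq m ((d ((0:A),(0:M),n,(0:E))).2.2.1)] at h1
    rw [hq n ((d ((0:A),(0:M),m,(0:E))).2.2.1)] at h2
    have hdd : (d ((q m n : A),(0:M),(0:M),(0:E))).1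
          + (d ((q m n : A),(0:M),(0:M),(0:E))).1
        = (q ((d ((0:A),m,(0:M),(0:E))).2.1) n
            + q ((d ((0:A),(0:M),n,(0:E))).2.2.1) m)
          + (q ((d ((0:A),n,(0:M),(0:E))).2.1) m
            + q ((d ((0:A),(0:M),m,(0:E))).2.2.1) n) := by
      rw [← h1, ← h2]; abel
    rw [hSapp m, hSapp n, hBapp m, hCapp m, hBapp n, hCapp n,
      q_smulK, q_smulK, map_add, map_add, LinearMap.add_apply, LinearMap.add_apply,
      ← smul_add]
    rw [show (d ((q m n : A),(0:M),(0:M),(0:E))).1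
        = ⅟(2:K) • ((d ((q m n : A),(0:M),(0:M),(0:E))).1
            + (d ((q m n : A),(0:M),(0:M),(0:E))).1) by
      rw [← two_smul K, invOf_smul_smul]]
    rw [hdd]
    congr 1
    ring
  -- ε(q m n) = E_{T m, n} + E_{T n, m}
  have heps : ∀ m n : M, ((d ((q m n : A),(0:M),(0:M),(0:E))).2.2.2 : Module.End K M)
      = EmapK K q (T m) n + EmapK K q (T n) m := by
    intro m n
    have h1 := I6 m n
    have h2 := I6 n m
    rw [← hq m n] at h2
    rw [hEneg m n, hdneg] at h2
    simp only [Prod.snd_neg, NegMemClass.coe_neg] at h2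
    have hdd : ((d ((q m n : A),(0:M),(0:M),(0:E))).2.2.2 : Module.End K M)
          + ((d ((q m n : A),(0:M),(0:M),(0:E))).2.2.2 : Module.End K M)
        = (EmapK K q ((d ((0:A),m,(0:M),(0:E))).2.1) n
            + EmapK K q m ((d ((0:A),(0:M),n,(0:E))).2.2.1))
          + (EmapK K q ((d ((0:A),n,(0:M),(0:E))).2.1) m
            + EmapK K q n ((d ((0:A),(0:M),m,(0:E))).2.2.1)) := by
      rw [← h1, ← h2]; abel
    rw [hTapp m, hTapp n, hBapp m, hCapp m, hBapp n, hCapp n,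
      EmapK_smul_left, EmapK_smul_left, EmapK_sub_left, EmapK_sub_left,
      ← smul_add]
    rw [show ((d ((q m n : A),(0:M),(0:M),(0:E))).2.2.2 : Module.End K M)
        = ⅟(2:K) • (((d ((q m n : A),(0:M),(0:M),(0:E))).2.2.2 : Module.End K M)
            + ((d ((q m n : A),(0:M),(0:M),(0:E))).2.2.2 : Module.End K M)) by
      rw [← two_smul K, invOf_smul_smul]]
    rw [hdd]
    rw [EmapK_swap q ((d ((0:A),(0:M),n,(0:E))).2.2.1) m,
      EmapK_swap q ((d ((0:A),(0:M),m,(0:E))).2.2.1) n]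
    congr 1
    abel
  -- operator-level identities
  have oS1 : ∀ a : A, S * aId K a - aId K a * S
      = aId K ((d (a,(0:M),(0:M),(0:E))).1) := by
    intro a
    refine LinearMap.ext fun p => ?_
    simp only [LinearMap.sub_apply, Module.End.mul_apply, aId_apply]
    rw [hSa a p]; abel
  have oT1 : ∀ a : A, T * aId K a - aId K a * T
      = ((d (a,(0:M),(0:M),(0:E))).2.2.2 : Module.End K M) := by
    intro a
    refine LinearMap.ext fun p => ?_
    simp only [LinearMap.sub_apply, Module.End.mul_apply, aId_apply]
    rw [hTa a p]; abel
  have oSx : ∀ x : E, S * (x : Module.End K M) - (x : Module.End K M) * S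
      = ((d ((0:A),(0:M),(0:M),x)).2.2.2 : Module.End K M) := by
    intro x
    refine LinearMap.ext fun p => ?_
    simp only [LinearMap.sub_apply, Module.End.mul_apply]
    rw [hSx x p]; abel
  have oTx : ∀ x : E, T * (x : Module.End K M) - (x : Module.End K M) * T
      = aId K ((d ((0:A),(0:M),(0:M),x)).1) := by
    intro x
    refine LinearMap.ext fun p => ?_
    simp only [LinearMap.sub_apply, Module.End.mul_apply, aId_apply]
    rw [hTx x p]; abel
  have haId_inj : ∀ b c : A, aId K (M := M) b = aId K c → b = c := by
    intro b c h
    have h2 : b - c = 0 := by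
      refine hann _ (fun p => ?_)
      have h3 := congrArg (fun f : Module.End K M => f p) h
      simp only [aId_apply] at h3
      rw [sub_smul, h3, sub_self]
    exact sub_eq_zero.mp h2
  have hSmem : S ∈ SE K q (E : Set (Module.End K M)) := by
    refine ⟨fun a => ⟨(d (a,(0:M),(0:M),(0:E))).1, oS1 a⟩, fun m n => ?_, fun x hx => ?_⟩
    · rw [oS1 (q m n), hdelta m n]
    · have h5 : S * x - x * S
          = ((d ((0:A),(0:M),(0:M),(⟨x,hx⟩:E))).2.2.2 : Module.End K M) := oSx ⟨x, hx⟩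
      rw [h5]
      exact SetLike.coe_mem _
  have hTmem : T ∈ TE K q (E : Set (Module.End K M)) := by
    refine ⟨fun a => ?_, fun m n => ?_, fun x hx => ?_⟩
    · rw [oT1 a]
      exact SetLike.coe_mem _
    · rw [oT1 (q m n), heps m n]
    · have h5 : T * x - x * T
          = aId K ((d ((0:A),(0:M),(0:M),(⟨x,hx⟩:E))).1) := oTx ⟨x, hx⟩
      exact ⟨(d ((0:A),(0:M),(0:M),(⟨x,hx⟩:E))).1, h5⟩
  -- additivity in A- and E- slots
  have hdA_add : ∀ a b : A, d (a + b,(0:M),(0:M),(0:E))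
      = d (a,(0:M),(0:M),(0:E)) + d (b,(0:M),(0:M),(0:E)) := by
    intro a b
    rw [show ((a+b : A),(0:M),(0:M),(0:E))
        = (a,(0:M),(0:M),(0:E)) + (b,(0:M),(0:M),(0:E)) by simp [Prod.ext_iff]]
    exact hdadd _ _
  have hdA_smul : ∀ (k : K) (a : A), d (k • a,(0:M),(0:M),(0:E))
      = k • d (a,(0:M),(0:M),(0:E)) := by
    intro k a
    rw [show ((k • a : A),(0:M),(0:M),(0:E)) = k • ((a : A),(0:M),(0:M),(0:E)) by
      simp [Prod.ext_iff]]
    exact hdsmul _ _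
  have hdX_add : ∀ x y : E, d ((0:A),(0:M),(0:M),x + y)
      = d ((0:A),(0:M),(0:M),x) + d ((0:A),(0:M),(0:M),y) := by
    intro x y
    rw [show ((0:A),(0:M),(0:M),x + y)
        = ((0:A),(0:M),(0:M),x) + ((0:A),(0:M),(0:M),y) by simp [Prod.ext_iff]]
    exact hdadd _ _
  have hdX_smul : ∀ (k : K) (x : E), d ((0:A),(0:M),(0:M),k • x)
      = k • d ((0:A),(0:M),(0:M),x) := by
    intro k x
    rw [show ((0:A),(0:M),(0:M),k • x) = k • ((0:A),(0:M),(0:M),x) by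
      simp [Prod.ext_iff]]
    exact hdsmul _ _
  -- combination identities for S and T
  have hST : ∀ p : M, S p + T p = B p := by
    intro p
    rw [hSapp, hTapp, ← smul_add,
      show (B p + C p) + (B p - C p) = (2:K) • B p by rw [two_smul]; abel,
      invOf_smul_smul]
  have hSTs : ∀ p : M, S p - T p = C p := by
    intro p
    rw [hSapp, hTapp, ← smul_sub,
      show (B p + C p) - (B p - C p) = (2:K) • C p by rw [two_smul]; abel,
      invOf_smul_smul]
  -- the decomposition
  refine ⟨((0:A), -m0, n0, (0:E)), S, T,
    fun u => ((d (u.1,(0:M),(0:M),(0:E))).1 + (d ((0:A),(0:M),(0:M),u.2.2.2)).1,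
      S u.2.1 + T u.2.1, S u.2.2.1 - T u.2.2.1,
      (d (u.1,(0:M),(0:M),(0:E))).2.2.2 + (d ((0:A),(0:M),(0:M),u.2.2.2)).2.2.2),
    hSmem, hTmem, ?_, ?_, ?_⟩
  · -- linearity of d'
    constructor
    · intro u v
      simp only [Prod.ext_iff, Prod.fst_add, Prod.snd_add]
      refine ⟨?_, ?_, ?_, ?_⟩
      · rw [hdA_add, hdX_add]
        simp only [Prod.fst_add]
        abel
      · rw [map_add, map_add]
        abel
      · rw [map_add, map_add]
        abel
      · rw [hdA_add, hdX_add]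
        simp only [Prod.snd_add]
        abel
    · intro k u
      simp only [Prod.ext_iff, Prod.smul_fst, Prod.smul_snd]
      refine ⟨?_, ?_, ?_, ?_⟩
      · rw [hdA_smul, hdX_smul]
        simp only [Prod.smul_fst]
        rw [smul_add]
      · rw [map_smul, map_smul]
        rw [smul_add]
      · rw [map_smul, map_smul]
        rw [smul_sub]
      · rw [hdA_smul, hdX_smul]
        simp only [Prod.smul_snd]
        rw [smul_add]
  · -- isDST
    intro a m n x hx sa ta hsa hta
    have hsa' : sa = (d (a,(0:M),(0:M),(0:E))).1 := by
      refine haId_inj _ _ ?_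
      rw [← hsa, oS1 a]
    have hta' : ta = (d ((0:A),(0:M),(0:M),(⟨x,hx⟩:E))).1 := by
      refine haId_inj _ _ ?_
      have h5 : T * x - x * T
          = aId K ((d ((0:A),(0:M),(0:M),(⟨x,hx⟩:E))).1) := oTx ⟨x, hx⟩
      rw [← hta, h5]
    refine ⟨?_, rfl, rfl, ?_⟩
    · dsimp only
      rw [hsa', hta']
    · dsimp only
      have h6 : S * x - x * S
          = ((d ((0:A),(0:M),(0:M),(⟨x,hx⟩:E))).2.2.2 : Module.End K M) := oSx ⟨x, hx⟩
      rw [Submodule.coe_add, oT1 a, h6]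
  · -- d = ad z + d'
    intro u
    have hu : u = (u.1,(0:M),(0:M),(0:E)) + ((0:A),u.2.1,(0:M),(0:E))
        + ((0:A),(0:M),u.2.2.1,(0:E)) + ((0:A),(0:M),(0:M),u.2.2.2) := by
      simp [Prod.ext_iff]
    conv_lhs => rw [hu]
    rw [hdadd, hdadd, hdadd]
    dsimp only
    simp only [Prod.ext_iff, Prod.fst_add, Prod.snd_add]
    refine ⟨?_, ?_, ?_, ?_⟩
    · simp only [brEinf]
      rw [hM1 u.2.1, hN1 u.2.2.1]
      simp only [map_neg, LinearMap.neg_apply]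
      abel
    · simp only [brEinf]
      rw [hA2 u.1, hN2 u.2.2.1, hX2 u.2.2.2, hST u.2.1, hBapp u.2.1]
      simp only [map_neg, smul_neg, neg_neg, ZeroMemClass.coe_zero,
        LinearMap.zero_apply, zero_smul, zero_add, add_zero, sub_neg_eq_add]
      abel
    · simp only [brEinf]
      rw [hA3 u.1, hM3 u.2.1, hX3 u.2.2.2, hSTs u.2.2.1, hCapp u.2.2.1]
      simp only [ZeroMemClass.coe_zero, LinearMap.zero_apply, zero_smul,
        neg_zero, zero_add, add_zero, smul_zero]
      abel
    · refine Subtype.ext ?_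
      simp only [brEinf, Submodule.coe_add]
      rw [hM4 u.2.1, hN4 u.2.2.1]
      simp only [EmapK_neg_left, ZeroMemClass.coe_zero, zero_mul, mul_zero,
        sub_zero, EmapK_zero_left, EmapK_zero_right]
      abel
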